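/- arXiv:1001.0158 — 14 statements merged into one kernel-verified Lean document; each statement's English description precedes it below -/
import Mathlib

section
/- Let E be a join-semilattice and L a poset. A map v : E → L is maxitive if and only if for all g, g' ∈ E, v (g ⊔ g') is the least upper bound in L of the pair {v g, v g'}. -/
/-- A map `v : E → L` between posets is maxitive if for every nonempty finite subset `S`
of `E` and every `b` that is the least upper bound of `S`, `v b` is the least upper bound
of the image `v '' S`. -/
def Maxitive {E L : Type*} [Preorder E] [Preorder L] (v : E → L) : Prop :=
  ∀ S : Set E, S.Nonempty → S.Finite → ∀ b : E, IsLUB S b → IsLUB (v '' S) (v b)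

lemma isLUB_insert_of_isLUB {L : Type*} [Preorder L] {A : Set L} {x y z : L}
    (hA : IsLUB A x) (hz : IsLUB {y, x} z) : IsLUB (insert y A) z := by
  constructor
  · rintro a (rfl | ha)
    · exact hz.1 (Set.mem_insert _ _)
    · exact (hA.1 ha).trans (hz.1 (by simp))
  · intro u hu
    refine hz.2 ?_
    rintro a (rfl | rfl)
    · exact hu (Set.mem_insert _ _)
    · exact hA.2 fun b hb => hu (Set.mem_insert_of_mem _ hb)

lemma binary_to_sup' {E L : Type*} [SemilatticeSup E] [PartialOrder L] {v : E → L}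
    (h : ∀ g g' : E, IsLUB {v g, v g'} (v (g ⊔ g'))) (t : Finset E) (ht : t.Nonempty) :
    IsLUB (v '' ↑t) (v (t.sup' ht id)) := by
  induction ht using Finset.Nonempty.cons_induction with
  | singleton a => simp
  | cons a t ha ht ih =>
    rw [Finset.sup'_cons]
    have := isLUB_insert_of_isLUB ih (h a (t.sup' ht id))
    rw [Finset.coe_cons, Set.image_insert_eq]
    exact this

/-- On a join-semilattice, a map is maxitive iff `v (g ⊔ g')` is the least upper bound of
the pair `{v g, v g'}` for all `g, g'`. -/
theorem maxitive_iff_binary {E L : Type*} [SemilatticeSup E] [PartialOrder L] (v : E → L) :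
    Maxitive v ↔ ∀ g g' : E, IsLUB {v g, v g'} (v (g ⊔ g')) := by
  constructor
  · intro hM g g'
    have := hM {g, g'} (by simp) (Set.toFinite _) (g ⊔ g')
      isLUB_pair
    simpa [Set.image_insert_eq] using this
  · intro h S hS hfin b hb
    obtain ⟨t, rfl⟩ := hfin.exists_finset_coe
    have ht : t.Nonempty := by exact_mod_cast hS
    have hlub := binary_to_sup' h t ht
    have hb' : b = t.sup' ht id := by
      refine le_antisymm ?_ ?_
      · exact hb.2 fun a ha => Finset.le_sup' (f := id) (by exact_mod_cast ha)
      · exact Finset.sup'_le _ _ fun a ha => hb.1 (by exact_mod_cast ha)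
    rw [hb']
    exact hlub
end

section
/- Let E be a join-semilattice and R a lattice-ordered additive commutative group (an additive commutative group with a lattice order in which addition is covariant in each variable). Let v : E → R satisfy v g ≥ 0 for all g and v (g ⊔ g') = v g ⊔ v g' for all g, g' ∈ E. Then v is alternating of infinite order: for every nonempty list l = [g₁, …, gₙ] of elements of E and every g ∈ E, 0 ≤ ((-1 : ℤ)^(n+1)) • (D l) g, where D is defined recursively on lists by D [] = v and D (h :: l') = fun g => (D l') (g ⊔ h) - (D l') g (so that D l = Δ_{g₁} … Δ_{gₙ} v with Δ_h w (g) = w (g ⊔ h) - w g). -/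
/-- Iterated Choquet difference operator: `iterDiff v [] = v` and
`iterDiff v (h :: l') g = iterDiff v l' (g ⊔ h) - iterDiff v l' g`, so that
`iterDiff v [g₁, …, gₙ] = Δ_{g₁} … Δ_{gₙ} v` with `Δ_h w g = w (g ⊔ h) - w g`. -/
def iterDiff {E R : Type*} [SemilatticeSup E] [AddCommGroup R] (v : E → R) :
    List E → E → R
  | [], g => v g
  | h :: l', g => iterDiff v l' (g ⊔ h) - iterDiff v l' g

/-- Key structural lemma: for nonnegative maxitive `v`, each iterated difference
`iterDiff v l` equals `(-1)^(|l|+1)` times a nonnegative "minitive" map. -/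
theorem aux_key {E R : Type*} [SemilatticeSup E] [Lattice R] [AddCommGroup R]
    [CovariantClass R R (· + ·) (· ≤ ·)]
    (v : E → R) (hpos : ∀ g : E, 0 ≤ v g)
    (hmax : ∀ g g' : E, v (g ⊔ g') = v g ⊔ v g') :
    ∀ l : List E, l ≠ [] → ∃ w : E → R, (∀ g, 0 ≤ w g) ∧
      (∀ g g', w (g ⊔ g') = w g ⊓ w g') ∧
      ∀ g, iterDiff v l g = ((-1 : ℤ) ^ (l.length + 1)) • w g := by
  have hdist : ∀ a b c : R, (a ⊓ b) ⊔ c = (a ⊔ c) ⊓ (b ⊔ c) := fun a b c =>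
    @sup_inf_right R (AddCommGroup.toDistribLattice R) a b c
  intro l
  induction l with
  | nil => simp
  | cons h l' ih =>
    intro _
    rcases eq_or_ne l' [] with rfl | hl'
    · refine ⟨fun g => (v h - v g) ⊔ 0, fun g => le_sup_right, ?_, ?_⟩
      · intro g g'
        show (v h - v (g ⊔ g')) ⊔ 0 = _
        rw [hmax, sub_sup, hdist]
      · intro g
        show v (g ⊔ h) - v g = ((-1 : ℤ) ^ ([h].length + 1)) • ((v h - v g) ⊔ 0)
        rw [hmax, sup_sub, sub_self, sup_comm (0 : R)]
        norm_num
    · obtain ⟨w, hw0, hwmin, hwit⟩ := ih hl'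
      refine ⟨fun g => (w g - w h) ⊔ 0, fun g => le_sup_right, ?_, ?_⟩
      · intro g g'
        show (w (g ⊔ g') - w h) ⊔ 0 = _
        rw [hwmin, inf_sub, hdist]
      · intro g
        have key : w (g ⊔ h) - w g = -((w g - w h) ⊔ 0) := by
          rw [hwmin]
          have : w g ⊓ w h - w g = (w g - w g) ⊓ (w h - w g) := inf_sub _ _ _
          rw [this, sub_self]
          rw [← neg_neg (0 ⊓ (w h - w g)), neg_inf]
          simp [sup_comm]
        show iterDiff v l' (g ⊔ h) - iterDiff v l' g = _
        rw [hwit, hwit, ← smul_sub, key, List.length_cons]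
        show (-1 : ℤ) ^ (l'.length + 1) • -((w g - w h) ⊔ 0) =
          (-1 : ℤ) ^ (l'.length + 1 + 1) • ((w g - w h) ⊔ 0)
        rw [smul_neg, ← neg_smul, ← mul_neg_one, ← pow_succ]

/-- Every nonnegative maxitive map from a join-semilattice into a lattice-ordered
abelian group is alternating of infinite order. -/
theorem maxitive_alternating {E R : Type*} [SemilatticeSup E] [Lattice R] [AddCommGroup R]
    [CovariantClass R R (· + ·) (· ≤ ·)]
    (v : E → R) (hpos : ∀ g : E, 0 ≤ v g)
    (hmax : ∀ g g' : E, v (g ⊔ g') = v g ⊔ v g')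
    (l : List E) (hl : l ≠ []) (g : E) :
    0 ≤ ((-1 : ℤ) ^ (l.length + 1)) • iterDiff v l g := by
  obtain ⟨w, hw0, -, hwit⟩ := aux_key v hpos hmax l hl
  rw [hwit, smul_smul, ← pow_add]
  have : (-1 : ℤ) ^ (l.length + 1 + (l.length + 1)) = 1 := by
    rw [← two_mul, pow_mul]; norm_num
  rw [this, one_smul]
  exact hw0 g
end

section
/- Let E and L be posets, I : L → Set E a family such that each I t is an ideal of E, and v : E → L a map such that for every g ∈ E the set T g = {t ∈ L | g ∈ I t} is nonempty, is an upper set, is downward directed, and has v g as its greatest lower bound (IsGLB (T g) (v g)). If the family is right-continuous, i.e. I t = ⋂ {I s | s ≫ t} for every t ∈ L (where ≫ is the way-above relation in L), then v is maxitive. -/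
/-- `y` is way above `x`. -/
def WayAbove {α : Type*} [Preorder α] (y x : α) : Prop :=
  ∀ D : Set α, D.Nonempty → DirectedOn (· ≥ ·) D → ∀ d : α, IsGLB D d → d ≤ x → ∃ z ∈ D, z ≤ y

/-- An ideal of a poset: a lower set closed under existing finite least upper bounds. -/
def IsIdeal {E : Type*} [Preorder E] (I : Set E) : Prop :=
  IsLowerSet I ∧
    ∀ S : Set E, S.Nonempty → S.Finite → S ⊆ I → ∀ b : E, IsLUB S b → b ∈ I

/-- A map defined as the infimum over a right-continuous family of ideals is maxitive. -/
theorem maxitive_of_rightContinuous_ideals {E L : Type*} [PartialOrder E] [PartialOrder L]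
    (I : L → Set E) (hI : ∀ t : L, IsIdeal (I t)) (v : E → L)
    (hT : ∀ g : E, {t : L | g ∈ I t}.Nonempty ∧ IsUpperSet {t : L | g ∈ I t} ∧
      DirectedOn (· ≥ ·) {t : L | g ∈ I t} ∧ IsGLB {t : L | g ∈ I t} (v g))
    (hrc : ∀ t : L, I t = ⋂ s ∈ {s : L | WayAbove s t}, I s) :
    Maxitive v := by
  intro S hSne hSfin b hb
  constructor
  · rintro _ ⟨g, hg, rfl⟩
    -- v g ≤ v b by monotonicity
    have hsub : {t : L | b ∈ I t} ⊆ {t : L | g ∈ I t} := fun t ht =>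
      (hI t).1 (hb.1 hg) ht
    exact (hT b).2.2.2.2 (fun t ht => (hT g).2.2.2.1 (hsub ht))
  · intro m hm
    have hbm : b ∈ I m := by
      rw [hrc m]
      refine Set.mem_iInter₂.2 fun s hs => ?_
      refine (hI s).2 S hSne hSfin (fun g hg => ?_) b hb
      obtain ⟨T1, T2, T3, T4⟩ := hT g
      obtain ⟨z, hz, hzs⟩ := hs _ T1 T3 (v g) T4 (hm ⟨g, hg, rfl⟩)
      exact T2 hzs hz
    exact (hT b).2.2.2.1 hbm
end

section
/- Let E be a poset and L a dually continuous poset. A map v : E → L is maxitive if and only if there exists a family I : L → Set E such that each I t is an ideal of E and, for every g ∈ E, the set {t ∈ L | g ∈ I t} is nonempty, is an upper set, is downward directed, and has v g as its greatest lower bound (IsGLB). -/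
/-- A poset is dually continuous. -/
def DuallyContinuous (α : Type*) [Preorder α] : Prop :=
  ∀ x : α, {y | WayAbove y x}.Nonempty ∧ DirectedOn (· ≥ ·) {y | WayAbove y x} ∧
    IsGLB {y | WayAbove y x} x

/-- If `L` is a dually continuous poset, a map `v : E → L` is maxitive iff it is
represented by a family of ideals of `E`. -/
theorem maxitive_iff_ideal_representation {E L : Type*} [PartialOrder E] [PartialOrder L]
    (hL : DuallyContinuous L) (v : E → L) :
    Maxitive v ↔ ∃ I : L → Set E, (∀ t : L, IsIdeal (I t)) ∧
      ∀ g : E, {t : L | g ∈ I t}.Nonempty ∧ IsUpperSet {t : L | g ∈ I t} ∧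
        DirectedOn (· ≥ ·) {t : L | g ∈ I t} ∧ IsGLB {t : L | g ∈ I t} (v g) := by
  constructor
  · intro hv
    have mono : ∀ g g' : E, g ≤ g' → v g ≤ v g' := by
      intro g g' h
      have hlub : IsLUB ({g, g'} : Set E) g' := by
        constructor
        · rintro x (rfl | rfl)
          · exact h
          · exact le_rfl
        · intro x hx
          exact hx (by simp)
      have := hv {g, g'} ⟨g, by simp⟩ (Set.toFinite _) g' hlub
      exact this.1 ⟨g, by simp, rfl⟩
    refine ⟨fun t => {g | v g ≤ t}, fun t => ⟨?_, ?_⟩,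
      fun g => ⟨⟨v g, le_rfl⟩, ?_, ?_, ?_⟩⟩
    · intro a c hca ha
      exact (mono c a hca).trans ha
    · intro S hne hfin hsub b hb
      refine (hv S hne hfin b hb).2 ?_
      rintro x ⟨g, hg, rfl⟩
      exact hsub hg
    · intro a c hac ha
      exact ha.trans hac
    · exact fun a ha c hc => ⟨v g, le_rfl, ha, hc⟩
    · exact ⟨fun t ht => ht, fun t ht => ht (le_refl (v g))⟩
  · rintro ⟨I, hI, hrep⟩
    intro S hne hfin b hb
    constructor
    · rintro x ⟨g, hg, rfl⟩
      -- v g ≤ v b since g ≤ b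
      have hsub : {t : L | b ∈ I t} ⊆ {t : L | g ∈ I t} :=
        fun t ht => (hI t).1 (hb.1 hg) ht
      exact (hrep b).2.2.2.2 fun t ht => (hrep g).2.2.2.1 (hsub ht)
    · intro u hu
      have key : ∀ w, WayAbove w u → b ∈ I w := by
        intro w hw
        have hSsub : S ⊆ I w := by
          intro g hg
          obtain ⟨ne, up, dir, glb⟩ := hrep g
          obtain ⟨z, hz, hzw⟩ := hw _ ne dir (v g) glb (hu ⟨g, hg, rfl⟩)
          exact up hzw hz
        exact (hI w).2 S hne hfin hSsub b hb
      exact (hL u).2.2.2 fun w hw => (hrep b).2.2.2.1 (key w hw)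
end

section
/- Let E be a poset, L a dually continuous poset, I : L → Set E a family of ideals of E, and v : E → L such that for every g ∈ E the set {t ∈ L | g ∈ I t} is nonempty, is an upper set, is downward directed, and has v g as its greatest lower bound (IsGLB). Then the family is right-continuous (I t = ⋂ {I s | s ≫ t} for all t ∈ L) if and only if I t = {g ∈ E | v g ≤ t} for all t ∈ L. -/
/-- A representing family of ideals is right-continuous iff it is the family of
sublevel sets of the represented map. -/
theorem rightContinuous_iff_sublevel {E L : Type*} [PartialOrder E] [PartialOrder L]
    (hL : DuallyContinuous L) (I : L → Set E) (hI : ∀ t : L, IsIdeal (I t)) (v : E → L)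
    (hT : ∀ g : E, {t : L | g ∈ I t}.Nonempty ∧ IsUpperSet {t : L | g ∈ I t} ∧
      DirectedOn (· ≥ ·) {t : L | g ∈ I t} ∧ IsGLB {t : L | g ∈ I t} (v g)) :
    (∀ t : L, I t = ⋂ s ∈ {s : L | WayAbove s t}, I s) ↔
      (∀ t : L, I t = {g : E | v g ≤ t}) := by
  have hmono : ∀ g : E, ∀ {a b : L}, a ≤ b → g ∈ I a → g ∈ I b :=
    fun g _ _ hab hga => (hT g).2.1 hab hga
  have hWA_le : ∀ {s t : L}, WayAbove s t → t ≤ s := by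
    intro s t hs
    obtain ⟨z, hz, hzs⟩ := hs {t} ⟨t, rfl⟩
      (fun a ha b hb => ⟨t, rfl, by simp_all, by simp_all⟩) t isGLB_singleton le_rfl
    simp only [Set.mem_singleton_iff] at hz
    exact hz ▸ hzs
  constructor
  · intro h t
    ext g
    simp only [Set.mem_setOf_eq]
    constructor
    · intro hg
      exact (hT g).2.2.2.1 hg
    · intro hvg
      rw [h t]
      simp only [Set.mem_iInter, Set.mem_setOf_eq]
      intro s hs
      obtain ⟨z, hz, hzs⟩ := hs {t' | g ∈ I t'} (hT g).1 (hT g).2.2.1 (v g) (hT g).2.2.2 hvg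
      exact hmono g hzs hz
  · intro h t
    ext g
    simp only [Set.mem_iInter, Set.mem_setOf_eq]
    constructor
    · intro hg s hs
      exact hmono g (hWA_le hs) hg
    · intro hg
      have hlb : v g ∈ lowerBounds {y | WayAbove y t} := by
        intro s hs
        have : g ∈ I s := hg s hs
        rw [h s] at this
        exact this
      have : v g ≤ t := (hL t).2.2.2 hlb
      rw [h t]
      exact this
end

section
/- Let Ē be a complete lattice and E ⊆ Ē a nonempty subset closed under the binary join of Ē. Let L be a poset that is dually continuous and in which every nonempty downward-directed subset has a greatest lower bound. Let v : E → L be maxitive. Define E* = {a ∈ Ē | the set {g ∈ E | a ≤ g} is nonempty and downward directed} (so E ⊆ E*). Then there exists a map v* : E* → L such that: (i) for every a ∈ E*, IsGLB {v g | g ∈ E, a ≤ g} (v* a); (ii) v* is maxitive on E*; (iii) v* g = v g for every g ∈ E; and (iv) every maxitive map w : E* → L with w g = v g for all g ∈ E satisfies w a ≤ v* a for all a ∈ E*. -/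
/-- A map `v` is maxitive on the subset `E` of the complete lattice `Ē` if, for every
nonempty finite `S ⊆ E` with `sSup S ∈ E`, `v (sSup S)` is the least upper bound of
`v '' S`. -/
def MaxitiveOn {Ebar L : Type*} [CompleteLattice Ebar] [Preorder L]
    (E : Set Ebar) (v : Ebar → L) : Prop :=
  ∀ S : Set Ebar, S ⊆ E → S.Nonempty → S.Finite → sSup S ∈ E → IsLUB (v '' S) (v (sSup S))

/-- Maximal extension `v*` of a maxitive map `v` to the set
`E* = {a | {g ∈ E | a ≤ g} is nonempty and downward directed}`. -/
theorem exists_maximal_maxitive_extension {Ebar L : Type*} [CompleteLattice Ebar]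
    [PartialOrder L] (hL : DuallyContinuous L)
    (hLglb : ∀ D : Set L, D.Nonempty → DirectedOn (· ≥ ·) D → ∃ d : L, IsGLB D d)
    (E : Set Ebar) (hE : E.Nonempty) (hEjoin : ∀ g ∈ E, ∀ g' ∈ E, g ⊔ g' ∈ E)
    (v : Ebar → L) (hv : MaxitiveOn E v) :
    ∃ vstar : Ebar → L,
      (∀ a ∈ {a : Ebar | {g ∈ E | a ≤ g}.Nonempty ∧ DirectedOn (· ≥ ·) {g ∈ E | a ≤ g}},
        IsGLB {x : L | ∃ g ∈ E, a ≤ g ∧ x = v g} (vstar a)) ∧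
      MaxitiveOn {a : Ebar | {g ∈ E | a ≤ g}.Nonempty ∧
        DirectedOn (· ≥ ·) {g ∈ E | a ≤ g}} vstar ∧
      (∀ g ∈ E, vstar g = v g) ∧
      (∀ w : Ebar → L,
        MaxitiveOn {a : Ebar | {g ∈ E | a ≤ g}.Nonempty ∧
          DirectedOn (· ≥ ·) {g ∈ E | a ≤ g}} w →
        (∀ g ∈ E, w g = v g) →
        ∀ a ∈ {a : Ebar | {g ∈ E | a ≤ g}.Nonempty ∧ DirectedOn (· ≥ ·) {g ∈ E | a ≤ g}},
          w a ≤ vstar a) := by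
  classical
  set Estar : Set Ebar :=
    {a : Ebar | {g ∈ E | a ≤ g}.Nonempty ∧ DirectedOn (· ≥ ·) {g ∈ E | a ≤ g}} with hEstarDef
  -- v is monotone on E
  have hvmono : ∀ g ∈ E, ∀ g' ∈ E, g ≤ g' → v g ≤ v g' := by
    intro g hg g' hg' hle
    have hss : sSup {g, g'} = g' := by rw [sSup_pair, sup_eq_right.mpr hle]
    have h := hv {g, g'} (by intro x hx; rcases hx with rfl | rfl <;> assumption)
      ⟨g, Or.inl rfl⟩ ((Set.finite_singleton _).insert _) (by rw [hss]; exact hg')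
    rw [hss] at h
    exact h.1 (Set.mem_image_of_mem v (Or.inl rfl))
  -- directedness of the image sets
  have hDdir : ∀ a ∈ Estar, DirectedOn (· ≥ ·) (v '' {g ∈ E | a ≤ g}) := by
    intro a ha x hx y hy
    obtain ⟨g1, hg1, rfl⟩ := hx
    obtain ⟨g2, hg2, rfl⟩ := hy
    obtain ⟨g3, hg3, h31, h32⟩ := ha.2 g1 hg1 g2 hg2
    exact ⟨v g3, Set.mem_image_of_mem v hg3,
      hvmono g3 hg3.1 g1 hg1.1 h31, hvmono g3 hg3.1 g2 hg2.1 h32⟩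
  have hD : ∀ a ∈ Estar, ∃ d : L, IsGLB (v '' {g ∈ E | a ≤ g}) d := fun a ha =>
    hLglb _ (ha.1.image v) (hDdir a ha)
  set vstar : Ebar → L := fun a => if h : a ∈ Estar then (hD a h).choose else v a with hvstarDef
  have hglb : ∀ a ∈ Estar, IsGLB (v '' {g ∈ E | a ≤ g}) (vstar a) := by
    intro a ha
    simp only [hvstarDef, dif_pos ha]
    exact (hD a ha).choose_spec
  -- the set in the statement equals the image set
  have hsetEq : ∀ a : Ebar,
      {x : L | ∃ g ∈ E, a ≤ g ∧ x = v g} = v '' {g ∈ E | a ≤ g} := by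
    intro a
    ext x
    constructor
    · rintro ⟨g, hg, hag, rfl⟩; exact ⟨g, ⟨hg, hag⟩, rfl⟩
    · rintro ⟨g, ⟨hg, hag⟩, rfl⟩; exact ⟨g, hg, hag, rfl⟩
  -- E ⊆ Estar
  have hEsub : E ⊆ Estar := by
    intro g hg
    exact ⟨⟨g, hg, le_refl g⟩, fun g1 hg1 g2 hg2 => ⟨g, ⟨hg, le_refl g⟩, hg1.2, hg2.2⟩⟩
  -- vstar is monotone on Estar
  have hmono : ∀ a ∈ Estar, ∀ b ∈ Estar, a ≤ b → vstar a ≤ vstar b := by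
    intro a ha b hb hab
    refine (hglb b hb).2 ?_
    rintro x ⟨g, ⟨hgE, hbg⟩, rfl⟩
    exact (hglb a ha).1 ⟨g, ⟨hgE, hab.trans hbg⟩, rfl⟩
  -- vstar extends v
  have hext : ∀ g ∈ E, vstar g = v g := by
    intro g hg
    refine (hglb g (hEsub hg)).unique ⟨?_, ?_⟩
    · rintro x ⟨g', ⟨hg', hgg'⟩, rfl⟩
      exact hvmono g hg g' hg' hgg'
    · intro x hx
      exact hx ⟨g, ⟨hg, le_refl g⟩, rfl⟩
  -- finite nonempty subsets of E have sSup in E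
  have hsupE : ∀ S : Set Ebar, S.Finite → S ⊆ E → S.Nonempty → sSup S ∈ E := by
    intro S hfin
    refine Set.Finite.induction_on (motive := fun s _ => s ⊆ E → s.Nonempty → sSup s ∈ E) S hfin
      (fun _ h => absurd h.ne_empty (by simp)) ?_
    intro a s _ _ ih hsub _
    rcases s.eq_empty_or_nonempty with rfl | hsne
    · simpa using hsub (Set.mem_insert a ∅)
    · rw [sSup_insert]
      exact hEjoin a (hsub (Set.mem_insert a s)) (sSup s)
        (ih (fun x hx => hsub (Set.mem_insert_of_mem a hx)) hsne)
  refine ⟨vstar, ?_, ?_, hext, ?_⟩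
  · intro a ha
    rw [hsetEq a]
    exact hglb a ha
  · -- maxitivity of vstar
    intro S hS hne hfin hsupS
    constructor
    · rintro x ⟨a, haS, rfl⟩
      exact hmono a (hS haS) (sSup S) hsupS (le_sSup haS)
    · intro u hu
      refine (hL u).2.2.2 ?_
      intro y hy
      -- for each a ∈ S, pick g ∈ E with a ≤ g and v g ≤ y
      have hchoice : ∀ a ∈ S, ∃ g, g ∈ E ∧ a ≤ g ∧ v g ≤ y := by
        intro a haS
        have haE := hS haS
        obtain ⟨z, hz, hzy⟩ := hy (v '' {g ∈ E | a ≤ g}) (haE.1.image v) (hDdir a haE)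
          (vstar a) (hglb a haE) (hu ⟨a, haS, rfl⟩)
        obtain ⟨g, hg, rfl⟩ := hz
        exact ⟨g, hg.1, hg.2, hzy⟩
      choose! f hfE hfle hfy using hchoice
      set T : Set Ebar := f '' S with hT
      have hTsub : T ⊆ E := by rintro x ⟨a, haS, rfl⟩; exact hfE a haS
      have hTE : sSup T ∈ E := hsupE T (hfin.image f) hTsub (hne.image f)
      have hST : sSup S ≤ sSup T :=
        sSup_le fun a ha => (hfle a ha).trans (le_sSup ⟨a, ha, rfl⟩)
      have hvT : v (sSup T) ≤ y := by
        refine (hv T hTsub (hne.image f) (hfin.image f) hTE).2 ?_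
        rintro x ⟨t, ⟨a, haS, rfl⟩, rfl⟩
        exact hfy a haS
      exact le_trans ((hglb (sSup S) hsupS).1 ⟨sSup T, ⟨hTE, hST⟩, rfl⟩) hvT
  · -- maximality
    intro w hw hwE a ha
    refine (hglb a ha).2 ?_
    rintro x ⟨g, ⟨hgE, hag⟩, rfl⟩
    have hgstar : g ∈ Estar := hEsub hgE
    have hss : sSup {a, g} = g := by rw [sSup_pair, sup_eq_right.mpr hag]
    have h := hw {a, g} (by intro x hx; rcases hx with rfl | rfl <;> assumption)
      ⟨a, Or.inl rfl⟩ ((Set.finite_singleton _).insert _) (by rw [hss]; exact hgstar)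
    rw [hss] at h
    calc w a ≤ w g := h.1 (Set.mem_image_of_mem w (Or.inl rfl))
      _ = v g := hwE g hgE
end

section
/- Let Ē be a complete lattice satisfying the finite distributive law x ⊓ (y ⊔ z) = (x ⊓ y) ⊔ (x ⊓ z), and let E ⊆ Ē be a nonempty subset closed under the binary join and the binary meet of Ē. Let L be a poset in which every nonempty upward-directed subset has a least upper bound, and let v : E → L be maxitive. Define E_* = {a ∈ Ē | ∀ g ∈ E, g ⊓ a ∈ E} (so E ⊆ E_*). Then there exists a map v_* : E_* → L such that: (i) for every a ∈ E_*, IsLUB {v g | g ∈ E, g ≤ a} (v_* a); (ii) v_* is maxitive on E_*; (iii) v_* g = v g for every g ∈ E; and (iv) every maxitive map w : E_* → L with w g = v g for all g ∈ E satisfies v_* a ≤ w a for all a ∈ E_*. -/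
private lemma inf_sSup_of_finite' {Ebar : Type*} [CompleteLattice Ebar]
    (hdist : ∀ x y z : Ebar, x ⊓ (y ⊔ z) = (x ⊓ y) ⊔ (x ⊓ z))
    (x : Ebar) (S : Set Ebar) (hS : S.Finite) :
    x ⊓ sSup S = sSup ((x ⊓ ·) '' S) := by
  refine Set.Finite.induction_on (motive := fun S _ => x ⊓ sSup S = sSup ((x ⊓ ·) '' S)) S hS (by simp) ?_
  intro a s _ _ ih
  rw [Set.image_insert_eq, sSup_insert, sSup_insert, hdist, ih]

/-- Minimal extension `v_*` of a maxitive map `v` to the set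
`E_* = {a | ∀ g ∈ E, g ⊓ a ∈ E}`. -/
theorem exists_minimal_maxitive_extension {Ebar L : Type*} [CompleteLattice Ebar]
    [PartialOrder L]
    (hdist : ∀ x y z : Ebar, x ⊓ (y ⊔ z) = (x ⊓ y) ⊔ (x ⊓ z))
    (hLlub : ∀ D : Set L, D.Nonempty → DirectedOn (· ≤ ·) D → ∃ d : L, IsLUB D d)
    (E : Set Ebar) (hE : E.Nonempty)
    (hEjoin : ∀ g ∈ E, ∀ g' ∈ E, g ⊔ g' ∈ E) (hEmeet : ∀ g ∈ E, ∀ g' ∈ E, g ⊓ g' ∈ E)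
    (v : Ebar → L) (hv : MaxitiveOn E v) :
    ∃ vlow : Ebar → L,
      (∀ a ∈ {a : Ebar | ∀ g ∈ E, g ⊓ a ∈ E},
        IsLUB {x : L | ∃ g ∈ E, g ≤ a ∧ x = v g} (vlow a)) ∧
      MaxitiveOn {a : Ebar | ∀ g ∈ E, g ⊓ a ∈ E} vlow ∧
      (∀ g ∈ E, vlow g = v g) ∧
      (∀ w : Ebar → L, MaxitiveOn {a : Ebar | ∀ g ∈ E, g ⊓ a ∈ E} w →
        (∀ g ∈ E, w g = v g) →
        ∀ a ∈ {a : Ebar | ∀ g ∈ E, g ⊓ a ∈ E}, vlow a ≤ w a) := by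
  classical
  set Est : Set Ebar := {a : Ebar | ∀ g ∈ E, g ⊓ a ∈ E} with hEst
  have hEsub : E ⊆ Est := fun g hg g' hg' => hEmeet g' hg' g hg
  set D : Ebar → Set L := fun a => {x : L | ∃ g ∈ E, g ≤ a ∧ x = v g} with hD
  -- pairwise LUB from maxitivity
  have hpair : ∀ g ∈ E, ∀ g' ∈ E, IsLUB {v g, v g'} (v (g ⊔ g')) := by
    intro g hg g' hg'
    have := hv {g, g'} (by rintro x (rfl | rfl) <;> assumption)
      ⟨g, by simp⟩ ((Set.finite_singleton _).insert _)
      (by rw [sSup_pair]; exact hEjoin g hg g' hg')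
    rwa [Set.image_pair, sSup_pair] at this
  have hmono : ∀ g ∈ E, ∀ g' ∈ E, g ≤ g' → v g ≤ v g' := by
    intro g hg g' hg' hle
    have h := hpair g hg g' hg'
    rw [sup_eq_right.mpr hle] at h
    exact h.1 (by simp)
  have hDne : ∀ a ∈ Est, (D a).Nonempty := by
    intro a ha
    obtain ⟨g0, hg0⟩ := hE
    exact ⟨v (g0 ⊓ a), g0 ⊓ a, ha g0 hg0, inf_le_right, rfl⟩
  have hDdir : ∀ a ∈ Est, DirectedOn (· ≤ ·) (D a) := by
    rintro a _ x ⟨g, hg, hga, rfl⟩ y ⟨g', hg', hg'a, rfl⟩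
    refine ⟨v (g ⊔ g'), ⟨g ⊔ g', hEjoin g hg g' hg', sup_le hga hg'a, rfl⟩, ?_, ?_⟩
    · exact (hpair g hg g' hg').1 (by simp)
    · exact (hpair g hg g' hg').1 (by simp)
  set vlow : Ebar → L := fun a =>
    if h : a ∈ Est then Classical.choose (hLlub (D a) (hDne a h) (hDdir a h)) else v a
    with hvlow
  have hlub : ∀ a ∈ Est, IsLUB (D a) (vlow a) := by
    intro a ha
    rw [hvlow]
    simp only [dif_pos ha]
    exact Classical.choose_spec (hLlub (D a) (hDne a ha) (hDdir a ha))
  refine ⟨vlow, hlub, ?_, ?_, ?_⟩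
  · -- maxitivity of vlow
    intro S hS hne hfin hsup
    constructor
    · rintro x ⟨a, haS, rfl⟩
      refine (hlub a (hS haS)).2 ?_
      rintro y ⟨g, hg, hga, rfl⟩
      exact (hlub (sSup S) hsup).1 ⟨g, hg, hga.trans (le_sSup haS), rfl⟩
    · intro b hb
      refine (hlub (sSup S) hsup).2 ?_
      rintro x ⟨g, hg, hgle, rfl⟩
      set T : Set Ebar := (g ⊓ ·) '' S with hT
      have hTE : T ⊆ E := by rintro _ ⟨a, haS, rfl⟩; exact hS haS g hg
      have hTsup : sSup T = g := by
        rw [hT, ← inf_sSup_of_finite' hdist g S hfin, inf_eq_left.mpr hgle]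
      have hlubT := hv T hTE (hne.image _) (hfin.image _) (by rw [hTsup]; exact hg)
      rw [hTsup] at hlubT
      refine hlubT.2 ?_
      rintro _ ⟨_, ⟨a, haS, rfl⟩, rfl⟩
      have h1 : v (g ⊓ a) ≤ vlow a :=
        (hlub a (hS haS)).1 ⟨g ⊓ a, hS haS g hg, inf_le_right, rfl⟩
      exact h1.trans (hb ⟨a, haS, rfl⟩)
  · -- agreement on E
    intro g hg
    refine ((hlub g (hEsub hg)).unique ?_)
    constructor
    · rintro x ⟨g', hg', hle, rfl⟩
      exact hmono g' hg' g hg hle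
    · intro b hb
      exact hb ⟨g, hg, le_rfl, rfl⟩
  · -- minimality
    intro w hw hwv a ha
    refine (hlub a ha).2 ?_
    rintro x ⟨g, hg, hga, rfl⟩
    have hset : ({g, a} : Set Ebar) ⊆ Est := by
      rintro x (rfl | rfl); exacts [hEsub hg, ha]
    have hsupmem : sSup ({g, a} : Set Ebar) ∈ Est := by
      rw [sSup_pair, sup_eq_right.mpr hga]; exact ha
    have h := hw {g, a} hset ⟨g, by simp⟩ ((Set.finite_singleton _).insert _) hsupmem
    rw [Set.image_pair, sSup_pair, sup_eq_right.mpr hga] at h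
    have : w g ≤ w a := h.1 (by simp)
    rwa [hwv g hg] at this
end

section
/- Let Ē be a complete lattice, E ⊆ Ē a subset, L a poset, a : L → Ē a family, and v : E → L a map such that for every g ∈ E the set T g = {t ∈ L | g ≤ a t} is nonempty, is an upper set, is downward directed, and has v g as its greatest lower bound (IsGLB (T g) (v g)). If the family a is right-continuous, i.e. a t = sInf {a s | s ≫ t} for every t ∈ L (infimum in Ē, ≫ the way-above relation in L), then v is maxitive and {g ∈ E | v g ≤ t} = {g ∈ E | g ≤ a t} for every t ∈ L; in particular v is residuated on Ē/E. -/
/-- `v` is residuated on `Ē/E`. -/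
def ResiduatedOn {Ebar L : Type*} [CompleteLattice Ebar] [Preorder L]
    (E : Set Ebar) (v : Ebar → L) : Prop :=
  ∀ t : L, ∃ a : Ebar, {g ∈ E | v g ≤ t} = {g ∈ E | g ≤ a}

/-- A map represented by a right-continuous family of principal ideals is maxitive and
residuated. -/
theorem maxitive_residuated_of_rightContinuous_principal {Ebar L : Type*}
    [CompleteLattice Ebar] [PartialOrder L]
    (E : Set Ebar) (a : L → Ebar) (v : Ebar → L)
    (hT : ∀ g ∈ E, {t : L | g ≤ a t}.Nonempty ∧ IsUpperSet {t : L | g ≤ a t} ∧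
      DirectedOn (· ≥ ·) {t : L | g ≤ a t} ∧ IsGLB {t : L | g ≤ a t} (v g))
    (hrc : ∀ t : L, a t = sInf {x : Ebar | ∃ s : L, WayAbove s t ∧ x = a s}) :
    MaxitiveOn E v ∧ (∀ t : L, {g ∈ E | v g ≤ t} = {g ∈ E | g ≤ a t}) ∧
      ResiduatedOn E v := by
  have key : ∀ g ∈ E, ∀ t : L, v g ≤ t ↔ g ≤ a t := by
    intro g hg t
    obtain ⟨hne, hup, hdir, hglb⟩ := hT g hg
    constructor
    · intro hvt
      rw [hrc t]
      refine le_sInf ?_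
      rintro x ⟨s, hs, rfl⟩
      obtain ⟨z, hz, hzs⟩ := hs _ hne hdir _ hglb hvt
      exact hup hzs hz
    · intro h
      exact hglb.1 h
  have hset : ∀ t : L, {g ∈ E | v g ≤ t} = {g ∈ E | g ≤ a t} := by
    intro t; ext g; simp only [Set.mem_setOf_eq]
    exact and_congr_right fun hg => key g hg t
  refine ⟨?_, hset, fun t => ⟨a t, hset t⟩⟩
  intro S hSE hne hfin hsup
  obtain ⟨hne', hup', hdir', hglb'⟩ := hT _ hsup
  constructor
  · rintro _ ⟨g, hg, rfl⟩
    obtain ⟨_, _, _, hglb⟩ := hT g (hSE hg)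
    refine hglb'.2 fun t ht => hglb.1 ?_
    exact le_trans (le_sSup hg) ht
  · intro t ht
    exact (key _ hsup t).2 (sSup_le fun g hg => (key g (hSE hg) t).1 (ht ⟨g, hg, rfl⟩))
end

section
/- Let Ē be a complete lattice, E ⊆ Ē a subset, L a poset, and v : E → L. If v is residuated on Ē/E, then v is completely maxitive: for every nonempty subset S ⊆ E with sSup S ∈ E (supremum in Ē), v (sSup S) is the least upper bound in L of the image v '' S. -/
/-- `v` is completely maxitive on `E ⊆ Ē`: for every nonempty `S ⊆ E` with `sSup S ∈ E`,
`v (sSup S)` is the least upper bound of `v '' S`. -/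
def CompletelyMaxitiveOn {Ebar L : Type*} [CompleteLattice Ebar] [Preorder L]
    (E : Set Ebar) (v : Ebar → L) : Prop :=
  ∀ S : Set Ebar, S ⊆ E → S.Nonempty → sSup S ∈ E → IsLUB (v '' S) (v (sSup S))

/-- Every residuated map is completely maxitive. -/
theorem completelyMaxitive_of_residuated {Ebar L : Type*} [CompleteLattice Ebar]
    [PartialOrder L] (E : Set Ebar) (v : Ebar → L) (h : ResiduatedOn E v) :
    CompletelyMaxitiveOn E v := by
  intro S hSE _hne hsup
  constructor
  · rintro _ ⟨g, hg, rfl⟩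
    obtain ⟨a, ha⟩ := h (v (sSup S))
    have key := Set.ext_iff.mp ha
    have hsa : sSup S ≤ a := ((key (sSup S)).mp ⟨hsup, le_refl _⟩).2
    exact ((key g).mpr ⟨hSE hg, (le_sSup hg).trans hsa⟩).2
  · intro t ht
    obtain ⟨a, ha⟩ := h t
    have key := Set.ext_iff.mp ha
    have hsa : sSup S ≤ a := sSup_le fun g hg =>
      ((key g).mp ⟨hSE hg, ht ⟨g, hg, rfl⟩⟩).2
    exact ((key (sSup S)).mpr ⟨hsup, hsa⟩).2
end

section
/- Let E be a poset and L a complete lattice that is dually continuous. If 𝒱 is a nonempty set of maxitive maps E → L that is downward directed for the pointwise order (for all v, w ∈ 𝒱 there is u ∈ 𝒱 with u ≤ v and u ≤ w pointwise), then the pointwise infimum g ↦ ⨅ (v ∈ 𝒱), v g is maxitive. -/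
/-- Combine a finite family of bounds using downward directedness. -/
lemma exists_lower_aux {E L : Type*} [CompleteLattice L]
    (V : Set (E → L)) (hne : V.Nonempty)
    (hdir : ∀ v ∈ V, ∀ w ∈ V, ∃ u ∈ V, (∀ g : E, u g ≤ v g) ∧ (∀ g : E, u g ≤ w g))
    (y : L) (S : Set E) (hS : S.Finite) (key : ∀ x ∈ S, ∃ v ∈ V, v x ≤ y) :
    ∃ v ∈ V, ∀ x ∈ S, v x ≤ y := by
  revert key
  refine Set.Finite.induction_on (motive := fun S _ => (∀ x ∈ S, ∃ v ∈ V, v x ≤ y) →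
      ∃ v ∈ V, ∀ x ∈ S, v x ≤ y) S hS (fun _ => ⟨hne.choose, hne.choose_spec, by simp⟩) ?_
  intro a s ha hsfin ih key
  obtain ⟨v, hv, hvs⟩ := ih (fun x hx => key x (Set.mem_insert_of_mem _ hx))
  obtain ⟨w, hw, hwa⟩ := key a (Set.mem_insert _ _)
  obtain ⟨t, ht, htv, htw⟩ := hdir v hv w hw
  refine ⟨t, ht, ?_⟩
  rintro x (rfl | hx)
  · exact (htw x).trans hwa
  · exact (htv x).trans (hvs x hx)

/-- The pointwise infimum of a nonempty, downward-directed family of maxitive maps into a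
dually continuous complete lattice is maxitive. -/
theorem maxitive_pointwise_iInf {E L : Type*} [PartialOrder E] [CompleteLattice L]
    (hL : DuallyContinuous L)
    (V : Set (E → L)) (hne : V.Nonempty) (hmax : ∀ v ∈ V, Maxitive v)
    (hdir : ∀ v ∈ V, ∀ w ∈ V, ∃ u ∈ V, (∀ g : E, u g ≤ v g) ∧ (∀ g : E, u g ≤ w g)) :
    Maxitive (fun g : E => ⨅ v ∈ V, v g) := by
  intro S hSne hSfin b hb
  have hmono : ∀ v ∈ V, ∀ x z : E, x ≤ z → v x ≤ v z := by
    intro v hv x z hxz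
    have h1 : IsLUB {x, z} z := by
      constructor
      · rintro a (rfl | rfl)
        · exact hxz
        · exact le_rfl
      · intro a ha
        exact ha (by simp)
    have h2 := hmax v hv {x, z} ⟨x, by simp⟩
      ((Set.finite_singleton z).insert x) z h1
    exact h2.1 ⟨x, by simp, rfl⟩
  constructor
  · rintro _ ⟨x, hx, rfl⟩
    exact iInf_mono fun v => iInf_mono' fun hv => ⟨hv, hmono v hv x b (hb.1 hx)⟩
  · intro u hu
    refine (hL u).2.2.2 ?_
    rintro y (hy : WayAbove y u)
    have key : ∀ x ∈ S, ∃ v ∈ V, v x ≤ y := by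
      intro x hx
      have hDne : ((fun v : E → L => v x) '' V).Nonempty := hne.image _
      have hDdir : DirectedOn (· ≥ ·) ((fun v : E → L => v x) '' V) := by
        rintro _ ⟨v, hv, rfl⟩ _ ⟨w, hw, rfl⟩
        obtain ⟨t, ht, htv, htw⟩ := hdir v hv w hw
        exact ⟨t x, ⟨t, ht, rfl⟩, htv x, htw x⟩
      have hDglb : IsGLB ((fun v : E → L => v x) '' V) (⨅ v ∈ V, v x) := by
        rw [show (⨅ v ∈ V, v x) = sInf ((fun v : E → L => v x) '' V) from
          (sInf_image).symm]
        exact isGLB_sInf _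
      have hle : (⨅ v ∈ V, v x) ≤ u := hu ⟨x, hx, rfl⟩
      obtain ⟨z, ⟨v, hv, rfl⟩, hz⟩ := hy _ hDne hDdir _ hDglb hle
      exact ⟨v, hv, hz⟩
    obtain ⟨v, hv, hvS⟩ := exists_lower_aux V hne hdir y S hSfin key
    have hlub := hmax v hv S hSne hSfin b hb
    have hvb : v b ≤ y := hlub.2 (by rintro _ ⟨x, hx, rfl⟩; exact hvS x hx)
    exact le_trans (iInf₂_le v hv) hvb
end

section
/- Let E be a poset and L a complete lattice that is dually continuous. For h ∈ E and s ∈ L, the map ⟨h,s⟩ : E → L (equal to s on {g | g ≤ h} and to ⊤ elsewhere) is maxitive. Moreover, if v : E → L is maxitive and s is way above v h in L, then ⟨h,s⟩ is way above v in the poset of maxitive maps. -/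
open Classical in
/-- The elementary map `⟨h,s⟩`, equal to `s` on `{g | g ≤ h}` and to `⊤` elsewhere. -/
noncomputable def bracket {E L : Type*} [Preorder E] [Preorder L] [Top L]
    (h : E) (s : L) : E → L :=
  fun g => if g ≤ h then s else ⊤

/-- `u` is way above `v` in the poset of maxitive maps (ordered pointwise). -/
def WayAboveMax {E L : Type*} [Preorder E] [CompleteLattice L] (u v : E → L) : Prop :=
  ∀ V : Set (E → L), (∀ w ∈ V, Maxitive w) → V.Nonempty →
    (∀ w ∈ V, ∀ w' ∈ V, ∃ u' ∈ V, (∀ g : E, u' g ≤ w g) ∧ (∀ g : E, u' g ≤ w' g)) →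
    (∀ g : E, (⨅ w ∈ V, w g) ≤ v g) → ∃ w ∈ V, ∀ g : E, w g ≤ u g

/-- The map `⟨h,s⟩` is maxitive, and it is way above any maxitive `v` as soon as
`s` is way above `v h`. -/
theorem bracket_maxitive_and_wayAbove {E L : Type*} [PartialOrder E] [CompleteLattice L]
    (hL : DuallyContinuous L) (h : E) (s : L) :
    Maxitive (bracket h s) ∧
      ∀ v : E → L, Maxitive v → WayAbove s (v h) → WayAboveMax (bracket h s) v := by
  classical
  have mono : ∀ w : E → L, Maxitive w → ∀ g g' : E, g ≤ g' → w g ≤ w g' := by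
    intro w hw g g' hgg'
    have hlub : IsLUB ({g, g'} : Set E) g' := by
      constructor
      · rintro x (rfl | rfl)
        · exact hgg'
        · exact le_refl x
      · intro x hx
        exact hx (by simp)
    have := hw {g, g'} ⟨g, by simp⟩ (Set.toFinite _) g' hlub
    exact this.1 ⟨g, by simp, rfl⟩
  constructor
  · intro S hSne hSfin b hb
    by_cases hbh : b ≤ h
    · have himg : bracket h s '' S = {s} := by
        apply Set.eq_singleton_iff_nonempty_unique_mem.2
        constructor
        · exact hSne.image _
        · rintro x ⟨g, hg, rfl⟩
          have : g ≤ h := le_trans (hb.1 hg) hbh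
          simp [bracket, this]
      rw [himg]
      have : bracket h s b = s := by simp [bracket, hbh]
      rw [this]
      exact isLUB_singleton
    · have hbt : bracket h s b = ⊤ := by simp [bracket, hbh]
      rw [hbt]
      constructor
      · intro x _; exact le_top
      · intro x hx
        -- some g ∈ S with ¬ g ≤ h
        obtain ⟨g, hgS, hgh⟩ : ∃ g ∈ S, ¬ g ≤ h := by
          by_contra hcon
          push_neg at hcon
          exact hbh (hb.2 fun y hy => hcon y hy)
        have : (⊤ : L) ∈ bracket h s '' S := ⟨g, hgS, by simp [bracket, hgh]⟩
        exact le_trans (le_of_eq rfl) (hx this)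
  · intro v _ hs V hVmax hVne hVdir hVinf
    set D : Set L := (fun w : E → L => w h) '' V with hD
    have hDne : D.Nonempty := hVne.image _
    have hDdir : DirectedOn (· ≥ ·) D := by
      rintro _ ⟨w, hw, rfl⟩ _ ⟨w', hw', rfl⟩
      obtain ⟨u', hu', h1, h2⟩ := hVdir w hw w' hw'
      exact ⟨u' h, ⟨u', hu', rfl⟩, h1 h, h2 h⟩
    have hglb : IsGLB D (⨅ w ∈ V, w h) := by
      have : sInf D = ⨅ w ∈ V, w h := by
        rw [hD, sInf_image]
      rw [← this]
      exact isGLB_sInf D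
    obtain ⟨z, ⟨w, hwV, rfl⟩, hzs⟩ := hs D hDne hDdir _ hglb (hVinf h)
    refine ⟨w, hwV, fun g => ?_⟩
    by_cases hgh : g ≤ h
    · have : bracket h s g = s := by simp [bracket, hgh]
      rw [this]
      exact le_trans (mono w (hVmax w hwV) g h hgh) hzs
    · simp [bracket, hgh]
end

section
/- Let E be a poset and L a complete lattice that is dually continuous. Then every maxitive map v : E → L satisfies, for all g ∈ E, v g = sInf {x : L | ∃ h ∈ E, ∃ s ∈ L, s ≫ v h ∧ x = ⟨h,s⟩ g}, i.e. v is the pointwise infimum of the maps ⟨h,s⟩ over all h ∈ E and s ∈ L with s way above v h. -/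
/-- Every maxitive map into a dually continuous complete lattice is the pointwise infimum
of the elementary maps `⟨h,s⟩` with `s` way above `v h`. -/
theorem maxitive_eq_iInf_brackets {E L : Type*} [PartialOrder E] [CompleteLattice L]
    (hL : DuallyContinuous L) (v : E → L) (hv : Maxitive v) (g : E) :
    v g = sInf {x : L | ∃ h : E, ∃ s : L, WayAbove s (v h) ∧ x = bracket h s g} := by
  -- monotonicity of v from maxitivity
  have hmono : ∀ a b : E, a ≤ b → v a ≤ v b := by
    intro a b hab
    have hlub : IsLUB ({a, b} : Set E) b := by
      constructor
      · rintro x (rfl | rfl) <;> simp [hab]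
      · intro x hx; exact hx (by simp)
    have := hv {a, b} (by simp) (by simp) b hlub
    exact this.1 ⟨a, by simp⟩
  -- way above implies above
  have hwa : ∀ s x : L, WayAbove s x → x ≤ s := by
    intro s x h
    obtain ⟨z, hz, hzs⟩ := h {x} ⟨x, rfl⟩
      (by intro a ha b hb; exact ⟨x, rfl, by simp_all, by simp_all⟩) x isGLB_singleton le_rfl
    cases hz; exact hzs
  apply le_antisymm
  · apply le_sInf
    rintro x ⟨h, s, hs, rfl⟩
    unfold bracket
    split
    · exact le_trans (hmono _ _ (by assumption)) (hwa _ _ hs)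
    · exact le_top
  · have hglb := (hL (v g)).2.2
    apply hglb.2
    intro s hs
    exact sInf_le ⟨g, s, hs, by simp [bracket]⟩
end

section
/- Let E be a poset and L a complete lattice that is dually continuous. Then the collection M of maxitive maps E → L, ordered pointwise, is a continuous lattice in the following sense: (i) for every set 𝒲 of maxitive maps, the pointwise supremum g ↦ ⨆ (w ∈ 𝒲), w g is maxitive (so M is a complete lattice); (ii) for every maxitive v, the set A_v of maxitive maps that are way above v in M is nonempty and downward directed for the pointwise order, and v g = ⨅ (u ∈ A_v), u g for every g ∈ E. -/
/-- Maxitive maps are monotone. -/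
theorem Maxitive.monotone' {E L : Type*} [Preorder E] [Preorder L] {v : E → L}
    (hv : Maxitive v) : Monotone v := by
  intro a b hab
  have hlub : IsLUB ({a, b} : Set E) b := by
    constructor
    · rintro x hx
      rcases hx with rfl | hx
      · exact hab
      · rw [Set.mem_singleton_iff] at hx; subst hx; exact le_refl x
    · intro c hc
      exact hc (by simp)
  have h := hv {a, b} ⟨a, by simp⟩ ((Set.finite_singleton b).insert a) b hlub
  exact h.1 ⟨a, by simp, rfl⟩

/-- Pointwise suprema of maxitive maps are maxitive. -/
theorem maxitive_biSup {E L : Type*} [PartialOrder E] [CompleteLattice L]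
    (W : Set (E → L)) (hW : ∀ w ∈ W, Maxitive w) :
    Maxitive (fun g : E => ⨆ w ∈ W, w g) := by
  intro S hSne hSfin b hb
  constructor
  · rintro x ⟨s, hs, rfl⟩
    exact iSup₂_mono fun w hw => (hW w hw).monotone' (hb.1 hs)
  · intro c hc
    apply iSup₂_le
    intro w hw
    apply ((hW w hw) S hSne hSfin b hb).2
    rintro x ⟨s, hs, rfl⟩
    calc w s ≤ ⨆ w ∈ W, w s := le_iSup₂ (f := fun (w : E → L) (_ : w ∈ W) => w s) w hw
      _ ≤ c := hc ⟨s, hs, rfl⟩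

open Classical in
/-- The step function at `(g, y)` is maxitive. -/
theorem maxitive_step {E L : Type*} [PartialOrder E] [CompleteLattice L] (g : E) (y : L) :
    Maxitive (fun h : E => if h ≤ g then y else ⊤) := by
  intro S hSne hSfin b hb
  by_cases hbg : b ≤ g
  · simp only [hbg, if_true]
    constructor
    · rintro x ⟨s, hs, rfl⟩
      simp [le_trans (hb.1 hs) hbg]
    · intro c hc
      obtain ⟨s, hs⟩ := hSne
      have : (if s ≤ g then y else ⊤) ≤ c := hc ⟨s, hs, rfl⟩
      simpa [le_trans (hb.1 hs) hbg] using this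
  · simp only [hbg, if_false]
    constructor
    · rintro x ⟨s, hs, rfl⟩; exact le_top
    · intro c hc
      have : ∃ s ∈ S, ¬ s ≤ g := by
        by_contra h
        push_neg at h
        exact hbg (hb.2 fun s hs => h s hs)
      obtain ⟨s, hs, hsg⟩ := this
      have := hc ⟨s, hs, rfl⟩
      simpa [hsg] using this

/-- If `L` is a dually continuous complete lattice, the maxitive maps `E → L` form a
continuous lattice: pointwise suprema of maxitive maps are maxitive, and each maxitive
map is the infimum of the (nonempty, downward-directed) set of maxitive maps way above
it. -/
theorem maxitive_maps_continuous_lattice {E L : Type*} [PartialOrder E] [CompleteLattice L]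
    (hL : DuallyContinuous L) :
    (∀ W : Set (E → L), (∀ w ∈ W, Maxitive w) → Maxitive (fun g : E => ⨆ w ∈ W, w g)) ∧
    (∀ v : E → L, Maxitive v →
      {u : E → L | Maxitive u ∧ WayAboveMax u v}.Nonempty ∧
      (∀ u ∈ {u : E → L | Maxitive u ∧ WayAboveMax u v},
        ∀ u' ∈ {u : E → L | Maxitive u ∧ WayAboveMax u v},
          ∃ u'' ∈ {u : E → L | Maxitive u ∧ WayAboveMax u v},
            (∀ g : E, u'' g ≤ u g) ∧ (∀ g : E, u'' g ≤ u' g)) ∧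
      (∀ g : E, v g = ⨅ u ∈ {u : E → L | Maxitive u ∧ WayAboveMax u v}, u g)) := by
  classical
  refine ⟨maxitive_biSup, ?_⟩
  intro v hv
  set A := {u : E → L | Maxitive u ∧ WayAboveMax u v} with hA
  -- constant ⊤ is in A
  have topMax : Maxitive (fun _ : E => (⊤ : L)) := by
    intro S hSne hSfin b hb
    constructor
    · rintro x ⟨s, hs, rfl⟩; exact le_refl _
    · intro c hc
      obtain ⟨s, hs⟩ := hSne
      exact hc ⟨s, hs, rfl⟩
  have topMem : (fun _ : E => (⊤ : L)) ∈ A := by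
    refine ⟨topMax, ?_⟩
    intro V _ hVne _ _
    obtain ⟨w, hw⟩ := hVne
    exact ⟨w, hw, fun g => le_top⟩
  -- each element of A dominates v
  have hvle : ∀ u ∈ A, ∀ g : E, v g ≤ u g := by
    intro u hu g
    obtain ⟨w, hwmem, hwle⟩ := hu.2 {v}
      (by rintro w hw; rw [Set.mem_singleton_iff] at hw; subst hw; exact hv)
      ⟨v, rfl⟩
      (by
        rintro w hw w' hw'
        rw [Set.mem_singleton_iff] at hw hw'
        refine ⟨w, by rw [hw]; exact rfl, fun g => le_refl _, fun g => ?_⟩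
        rw [hw, hw'])
      (fun g => by simp)
    rw [Set.mem_singleton_iff] at hwmem
    subst hwmem
    exact hwle g
  -- step functions are way above v
  have stepWay : ∀ (g : E) (y : L), WayAbove y (v g) →
      WayAboveMax (fun h : E => if h ≤ g then y else ⊤) v := by
    intro g y hy V hVmax hVne hVdir hVinf
    have hDne : ((fun w : E → L => w g) '' V).Nonempty := hVne.image _
    have hDdir : DirectedOn (· ≥ ·) ((fun w : E → L => w g) '' V) := by
      rintro _ ⟨w1, hw1, rfl⟩ _ ⟨w2, hw2, rfl⟩
      obtain ⟨w, hw, hle1, hle2⟩ := hVdir w1 hw1 w2 hw2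
      exact ⟨w g, ⟨w, hw, rfl⟩, hle1 g, hle2 g⟩
    have hglb : IsGLB ((fun w : E → L => w g) '' V) (⨅ w ∈ V, w g) := by
      have := isGLB_sInf ((fun w : E → L => w g) '' V)
      rwa [sInf_image] at this
    obtain ⟨z, ⟨w, hwV, rfl⟩, hzy⟩ := hy _ hDne hDdir _ hglb (hVinf g)
    refine ⟨w, hwV, fun h => ?_⟩
    by_cases hhg : h ≤ g
    · simp only [hhg, if_true]
      exact le_trans ((hVmax w hwV).monotone' hhg) hzy
    · simp [hhg]
  refine ⟨⟨_, topMem⟩, ?_, ?_⟩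
  · -- directedness
    intro u1 hu1 u2 hu2
    set B := {w : E → L | Maxitive w ∧ (∀ h, w h ≤ u1 h) ∧ (∀ h, w h ≤ u2 h)} with hB
    refine ⟨fun g => ⨆ w ∈ B, w g, ⟨maxitive_biSup B fun w hw => hw.1, ?_⟩,
      fun g => iSup₂_le fun w hw => hw.2.1 g, fun g => iSup₂_le fun w hw => hw.2.2 g⟩
    intro V hVmax hVne hVdir hVinf
    obtain ⟨w1, hw1V, hw1le⟩ := hu1.2 V hVmax hVne hVdir hVinf
    obtain ⟨w2, hw2V, hw2le⟩ := hu2.2 V hVmax hVne hVdir hVinf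
    obtain ⟨w, hwV, hle1, hle2⟩ := hVdir w1 hw1V w2 hw2V
    refine ⟨w, hwV, fun g => ?_⟩
    have hwB : w ∈ B := ⟨hVmax w hwV, fun h => le_trans (hle1 h) (hw1le h),
      fun h => le_trans (hle2 h) (hw2le h)⟩
    exact le_iSup₂ (f := fun (w : E → L) (_ : w ∈ B) => w g) w hwB
  · -- the infimum formula
    intro g
    apply le_antisymm
    · exact le_iInf₂ fun u hu => hvle u hu g
    · have key : ∀ y ∈ {y | WayAbove y (v g)}, (⨅ u ∈ A, u g) ≤ y := by
        intro y hy
        have hmem : (fun h : E => if h ≤ g then y else ⊤) ∈ A :=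
          ⟨maxitive_step g y, stepWay g y hy⟩
        calc (⨅ u ∈ A, u g) ≤ (if g ≤ g then y else ⊤) :=
              iInf₂_le (f := fun (u : E → L) (_ : u ∈ A) => u g) _ hmem
          _ = y := by simp
      have hglb := (hL (v g)).2.2
      calc (⨅ u ∈ A, u g) ≤ sInf {y | WayAbove y (v g)} := le_sInf key
        _ = v g := hglb.sInf_eq
end

section
/- Let L be a complete lattice that is dually continuous and satisfies the finite distributive law x ⊓ (y ⊔ z) = (x ⊓ y) ⊔ (x ⊓ z). Then L is a co-Heyting algebra (dual frame): for all r, s ∈ L there exists an element e ∈ L (denoted r ← s) such that for all t ∈ L, s ≤ r ⊔ t ↔ e ≤ t; consequently, for every x ∈ L and every set S ⊆ L, x ⊔ sInf S = ⨅ (y ∈ S), (x ⊔ y). -/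
lemma WayAbove.le {α : Type*} [PartialOrder α] {y x : α} (h : WayAbove y x) : x ≤ y := by
  obtain ⟨z, hz, hzy⟩ := h {x} ⟨x, rfl⟩
    (fun a ha b hb => ⟨x, rfl, by simp_all, by simp_all⟩) x isGLB_singleton le_rfl
  simp only [Set.mem_singleton_iff] at hz
  subst hz; exact hzy

/-- Dual distributivity. -/
lemma sup_inf_dual {L : Type*} [Lattice L]
    (hdist : ∀ x y z : L, x ⊓ (y ⊔ z) = (x ⊓ y) ⊔ (x ⊓ z)) (x y z : L) :
    x ⊔ (y ⊓ z) = (x ⊔ y) ⊓ (x ⊔ z) := by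
  apply le_antisymm
  · exact le_inf (sup_le_sup_left inf_le_left x) (sup_le_sup_left inf_le_right x)
  · calc (x ⊔ y) ⊓ (x ⊔ z) = ((x ⊔ y) ⊓ x) ⊔ ((x ⊔ y) ⊓ z) := hdist _ _ _
      _ = x ⊔ (z ⊓ x ⊔ z ⊓ y) := by rw [inf_eq_right.mpr le_sup_left, inf_comm, hdist]
      _ ≤ x ⊔ (y ⊓ z) := sup_le le_sup_left (sup_le
            (le_sup_left.trans' inf_le_right) (le_sup_right.trans' (by rw [inf_comm])))

/-- Join distributes over infima of downward-directed sets. -/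
lemma sup_sInf_directed {L : Type*} [CompleteLattice L] (hL : DuallyContinuous L)
    (x : L) (D : Set L) (hne : D.Nonempty) (hdir : DirectedOn (· ≥ ·) D) :
    x ⊔ sInf D = ⨅ d ∈ D, x ⊔ d := by
  apply le_antisymm
  · exact le_iInf₂ fun d hd => sup_le_sup_left (sInf_le hd) x
  · have hglb := (hL (x ⊔ sInf D)).2.2
    apply hglb.2
    intro w hw
    obtain ⟨z, hz, hzw⟩ := hw D hne hdir (sInf D) (isGLB_sInf D) le_sup_right
    have hxw : x ≤ w := le_sup_left.trans hw.le
    exact (iInf₂_le z hz).trans (sup_le hxw hzw)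

lemma finset_sup_inf {L : Type*} [Lattice L]
    (hdist : ∀ x y z : L, x ⊓ (y ⊔ z) = (x ⊓ y) ⊔ (x ⊓ z)) (x : L)
    (F : Finset L) (hF : F.Nonempty) :
    x ⊔ F.inf' hF id = F.inf' hF (fun y => x ⊔ y) := by
  induction hF using Finset.Nonempty.cons_induction with
  | singleton a => simp
  | cons a s ha hs ih =>
      rw [Finset.inf'_cons hs, Finset.inf'_cons hs, sup_inf_dual hdist, ih, id]

/-- A distributive, dually continuous complete lattice is a co-Heyting algebra (a dual
frame): a co-implication `r ← s` exists, and binary joins distribute over arbitrary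
infima. -/
theorem coHeyting_of_distributive_duallyContinuous {L : Type*} [CompleteLattice L]
    (hL : DuallyContinuous L)
    (hdist : ∀ x y z : L, x ⊓ (y ⊔ z) = (x ⊓ y) ⊔ (x ⊓ z)) :
    (∀ r s : L, ∃ e : L, ∀ t : L, s ≤ r ⊔ t ↔ e ≤ t) ∧
    (∀ (x : L) (S : Set L), x ⊔ sInf S = ⨅ y ∈ S, (x ⊔ y)) := by
  have main : ∀ (x : L) (S : Set L), x ⊔ sInf S = ⨅ y ∈ S, (x ⊔ y) := by
    intro x S
    rcases S.eq_empty_or_nonempty with rfl | ⟨s₀, hs₀⟩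
    · simp
    · set D : Set L := {d | ∃ F : Finset L, ∃ h : F.Nonempty, ↑F ⊆ S ∧ d = F.inf' h id}
        with hD
      have hDne : D.Nonempty := ⟨s₀, {s₀}, Finset.singleton_nonempty s₀, by simpa, by simp⟩
      classical
      have hDdir : DirectedOn (· ≥ ·) D := by
        rintro a ⟨F, hF, hFS, rfl⟩ b ⟨G, hG, hGS, rfl⟩
        have hFG : (F ∪ G).Nonempty := hF.mono Finset.subset_union_left
        refine ⟨(F ∪ G).inf' hFG id, ⟨F ∪ G, hFG, ?_, rfl⟩, ?_, ?_⟩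
        · rw [Finset.coe_union]; exact Set.union_subset hFS hGS
        · exact Finset.le_inf' hF _ fun b hb =>
            Finset.inf'_le_of_le _ (Finset.mem_union_left _ hb) le_rfl
        · exact Finset.le_inf' hG _ fun b hb =>
            Finset.inf'_le_of_le _ (Finset.mem_union_right _ hb) le_rfl
      have hsInf : sInf D = sInf S := by
        apply le_antisymm
        · exact le_sInf fun s hs => sInf_le ⟨{s}, Finset.singleton_nonempty s, by simpa, by simp⟩
        · refine le_sInf ?_
          rintro d ⟨F, hF, hFS, rfl⟩
          exact Finset.le_inf' _ _ fun b hb => sInf_le (hFS hb)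
      have hiInf : (⨅ d ∈ D, x ⊔ d) = ⨅ y ∈ S, x ⊔ y := by
        apply le_antisymm
        · refine le_iInf₂ fun s hs => iInf₂_le s ⟨{s}, Finset.singleton_nonempty s, by simpa, by simp⟩
        · refine le_iInf₂ ?_
          rintro d ⟨F, hF, hFS, rfl⟩
          rw [finset_sup_inf hdist x F hF]
          exact Finset.le_inf' _ _ fun b hb => iInf₂_le b (hFS hb)
      rw [← hsInf, sup_sInf_directed hL x D hDne hDdir, hiInf]
  refine ⟨fun r s => ?_, main⟩
  refine ⟨sInf {t | s ≤ r ⊔ t}, fun t => ⟨fun h => sInf_le h, fun h => ?_⟩⟩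
  have : s ≤ r ⊔ sInf {t | s ≤ r ⊔ t} := by
    rw [main r {t | s ≤ r ⊔ t}]
    exact le_iInf₂ fun u hu => hu
  exact this.trans (sup_le_sup_left h r)
end
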